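/- Let ρ solve ρ(t) = ρ₀·Ḡ(t) + ∫₀ᵗ 𝟙{ρ(u)<1}·F̄(t−u)·λ(u) du on [0,T] with Ḡ continuous. Then ρ is continuous, and hence the preimage ρ⁻¹([0,1)) ∩ [0,T] is relatively open in [0,T]. -/

import Mathlib

open MeasureTheory Set Filter Topology

theorem stmt_4 (T : ℝ) (hT : 0 < T) (lam F G ρ : ℝ → ℝ) (ρ0 : ℝ)
    (hρ0 : ρ0 ∈ Icc (0:ℝ) 1)
    (hlam_int : IntegrableOn lam (Icc 0 T))
    (hlam_nonneg : ∀ u ∈ Icc (0:ℝ) T, 0 ≤ lam u)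
    (hF_mono : AntitoneOn F (Ici 0))
    (hF_range : ∀ x ∈ Ici (0:ℝ), F x ∈ Icc (0:ℝ) 1)
    (hF_cont : ContinuousOn F (Ici 0))
    (hG_mono : AntitoneOn G (Ici 0))
    (hG_range : ∀ x ∈ Ici (0:ℝ), G x ∈ Icc (0:ℝ) 1)
    (hG_cont : ContinuousOn G (Ici 0))
    (hρ_meas : Measurable ρ)
    (hρ_range : ∀ t ∈ Icc (0:ℝ) T, ρ t ∈ Icc (0:ℝ) 1)
    (heq : ∀ t ∈ Icc (0:ℝ) T,
      ρ t = ρ0 * G t + ∫ u in (0:ℝ)..t, (if ρ u < 1 then F (t - u) * lam u else 0)) :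
    ContinuousOn ρ (Icc 0 T) ∧
    ∃ U : Set ℝ, IsOpen U ∧ ρ ⁻¹' (Ico 0 1) ∩ Icc 0 T = U ∩ Icc 0 T := by
  set h' : ℝ → ℝ := fun u => if ρ u < 1 then lam u else 0 with hh'
  set g : ℝ → ℝ → ℝ := fun t => (Ioc 0 t).indicator (fun u => h' u * F (t - u)) with hg
  have hFbound : ∀ x : ℝ, 0 ≤ x → |F x| ≤ 1 := by
    intro x hx
    have := hF_range x hx
    rw [abs_le]; exact ⟨by linarith [this.1], this.2⟩
  have hint_eq : ∀ t ∈ Icc (0:ℝ) T,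
      (∫ u in (0:ℝ)..t, (if ρ u < 1 then F (t - u) * lam u else 0)) = ∫ u, g t u := by
    intro t ht
    rw [intervalIntegral.integral_of_le ht.1, ← integral_indicator measurableSet_Ioc]
    congr 1
    funext u
    by_cases hm : u ∈ Ioc 0 t
    · simp only [hg, indicator_of_mem hm, hh']
      split_ifs <;> ring
    · simp only [hg, indicator_of_notMem hm]
  have h'aesm : AEStronglyMeasurable h' (volume.restrict (Icc 0 T)) := by
    have hrw : h' = Set.indicator {u | ρ u < 1} lam := by
      funext u; simp [hh', Set.indicator, Set.mem_setOf_eq]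
    rw [hrw]
    exact hlam_int.1.indicator (measurableSet_lt hρ_meas measurable_const)
  have hconv : ContinuousOn (fun t => ∫ u, g t u) (Icc 0 T) := by
    intro t₀ ht₀
    have hmem : ∀ᶠ s in 𝓝[Icc 0 T] t₀, s ∈ Icc (0:ℝ) T := eventually_mem_nhdsWithin
    have hgm : ∀ s ∈ Icc (0:ℝ) T, AEStronglyMeasurable (g s) volume := by
      intro s hs
      rw [hg]
      rw [aestronglyMeasurable_indicator_iff measurableSet_Ioc]
      apply AEStronglyMeasurable.mul
      · exact h'aesm.mono_measure
          (Measure.restrict_mono (Ioc_subset_Icc_self.trans (Icc_subset_Icc le_rfl hs.2)) le_rfl)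
      · have hc : ContinuousOn (fun u => F (s - u)) (Iic s) := by
          apply hF_cont.comp (continuous_const.sub continuous_id).continuousOn
          intro u hu
          simp only [mem_Iic] at hu
          simp only [mem_Ici, id]
          change (0:ℝ) ≤ s - u
          linarith
        exact (hc.mono Ioc_subset_Iic_self).aestronglyMeasurable measurableSet_Ioc
    have key : Tendsto (fun s => ∫ u, g s u) (𝓝[Icc 0 T] t₀) (𝓝 (∫ u, g t₀ u)) := by
      apply tendsto_integral_filter_of_dominated_convergence
        ((Icc (0:ℝ) T).indicator fun u => ‖lam u‖)
      · exact hmem.mono fun s hs => hgm s hs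
      · refine hmem.mono fun s hs => Eventually.of_forall fun u => ?_
        by_cases hu : u ∈ Ioc 0 s
        · have hu' : u ∈ Icc (0:ℝ) T := ⟨hu.1.le, hu.2.trans hs.2⟩
          simp only [hg, indicator_of_mem hu, indicator_of_mem hu']
          have h1 : |h' u| ≤ ‖lam u‖ := by
            simp only [hh', Real.norm_eq_abs]
            split_ifs
            · exact le_rfl
            · simpa using abs_nonneg (lam u)
          calc ‖h' u * F (s - u)‖ = |h' u| * |F (s - u)| := abs_mul _ _
            _ ≤ ‖lam u‖ * 1 :=
              mul_le_mul h1 (hFbound _ (by linarith [hu.1, hu.2])) (abs_nonneg _) (norm_nonneg _)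
            _ = ‖lam u‖ := mul_one _
        · simp only [hg, indicator_of_notMem hu, norm_zero]
          exact indicator_nonneg (fun v _ => norm_nonneg _) u
      · exact (integrable_indicator_iff measurableSet_Icc).2 hlam_int.norm
      · have hae : ∀ᵐ u : ℝ, u ≠ t₀ := by
          rw [ae_iff]
          simpa using Real.volume_singleton (a := t₀)
        refine hae.mono fun u hu => ?_
        rcases le_or_gt u 0 with h0 | h0
        · have hz : ∀ s, g s u = 0 := fun s =>
            indicator_of_notMem (fun hmem => absurd hmem.1 (not_lt.2 h0)) _
          simp only [hz]
          exact tendsto_const_nhds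
        rcases lt_or_gt_of_ne hu with hlt | hgt
        · have hev : ∀ᶠ s in 𝓝[Icc 0 T] t₀, u ∈ Ioc 0 s := by
            have h1 : ∀ᶠ s in 𝓝 t₀, u < s := eventually_gt_nhds hlt
            exact (h1.filter_mono nhdsWithin_le_nhds).mono fun s hs => ⟨h0, hs.le⟩
          have hF' : Tendsto (fun s => F (s - u)) (𝓝[Icc 0 T] t₀) (𝓝 (F (t₀ - u))) := by
            have hc : ContinuousWithinAt F (Ici 0) (t₀ - u) :=
              hF_cont _ (by simp only [mem_Ici]; linarith)
            apply hc.tendsto.comp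
            apply tendsto_nhdsWithin_of_tendsto_nhds_of_eventually_within
            · exact ((continuous_id.sub continuous_const).tendsto t₀).mono_left nhdsWithin_le_nhds
            · exact hev.mono fun s hs => by simp only [mem_Ici]; linarith [hs.2]
          have htend : Tendsto (fun s => h' u * F (s - u)) (𝓝[Icc 0 T] t₀)
              (𝓝 (h' u * F (t₀ - u))) := hF'.const_mul _
          have heq₀ : g t₀ u = h' u * F (t₀ - u) := indicator_of_mem (mem_Ioc.mpr ⟨h0, hlt.le⟩) _
          rw [heq₀]
          exact htend.congr' (hev.mono fun s hs => (indicator_of_mem hs _).symm)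
        · have hev : ∀ᶠ s in 𝓝[Icc 0 T] t₀, g s u = 0 := by
            have h1 : ∀ᶠ s in 𝓝 t₀, s < u := eventually_lt_nhds hgt
            exact (h1.filter_mono nhdsWithin_le_nhds).mono fun s hs =>
              indicator_of_notMem (fun hmem => absurd hmem.2 (not_le.2 hs)) _
          have hz : g t₀ u = 0 :=
            indicator_of_notMem (fun hmem => absurd hmem.2 (not_le.2 hgt)) _
          rw [hz]
          exact Tendsto.congr' (hev.mono fun s hs => hs.symm) tendsto_const_nhds
    exact key
  have hρcont : ContinuousOn ρ (Icc 0 T) := by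
    have h1 : ContinuousOn (fun t => ρ0 * G t + ∫ u, g t u) (Icc 0 T) :=
      (continuousOn_const.mul (hG_cont.mono (Icc_subset_Ici_self))).add hconv
    apply h1.congr
    intro t ht
    rw [heq t ht, hint_eq t ht]
  refine ⟨hρcont, ?_⟩
  obtain ⟨U, hUopen, hU⟩ := (continuousOn_iff'.1 hρcont) (Iio 1) isOpen_Iio
  refine ⟨U, hUopen, ?_⟩
  rw [← hU]
  ext x
  simp only [mem_inter_iff, mem_preimage, mem_Ico, mem_Iio]
  constructor
  · rintro ⟨⟨_, h1⟩, hx⟩; exact ⟨h1, hx⟩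
  · rintro ⟨h1, hx⟩; exact ⟨⟨(hρ_range x hx).1, h1⟩, hx⟩
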